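/- Let H be a Hilbert space, (g_i) a Bessel sequence in H with bound B, and (f_i) a sequence in H such that g = Σᵢ ⟨g, fᵢ⟩ gᵢ for every g ∈ H. Then (f_i) satisfies the lower frame condition with bound 1/B: for every g ∈ H with Σᵢ |⟨g, fᵢ⟩|² < ∞, one has (1/B)‖g‖² ≤ Σᵢ |⟨g, fᵢ⟩|². -/

import Mathlib

open scoped RealInnerProductSpace

/-- If `(gᵢ)` is Bessel with bound `B` and `g = Σᵢ ⟨g, fᵢ⟩ gᵢ` for all `g`, then `(fᵢ)`
satisfies the lower frame condition with bound `1/B`. -/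
theorem stmt_6 (H : Type*) [NormedAddCommGroup H] [InnerProductSpace ℝ H]
    (g F : ℕ → H) (B : ℝ) (hB : 0 < B)
    (hBessel : ∀ f : H, Summable (fun i => ⟪f, g i⟫ ^ 2) ∧ ∑' i, ⟪f, g i⟫ ^ 2 ≤ B * ‖f‖ ^ 2)
    (hexp : ∀ x : H, Filter.Tendsto (fun n => ∑ i ∈ Finset.range n, ⟪x, F i⟫ • g i)
      Filter.atTop (nhds x)) :
    ∀ h : H, Summable (fun i => ⟪h, F i⟫ ^ 2) →
      (1 / B) * ‖h‖ ^ 2 ≤ ∑' i, ⟪h, F i⟫ ^ 2 := by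
  intro h hsum
  set T := ∑' i, ⟪h, F i⟫ ^ 2 with hT
  have hTnonneg : 0 ≤ T := tsum_nonneg fun i => sq_nonneg _
  -- inner with h of partial sums tends to ‖h‖²
  have htend : Filter.Tendsto (fun n => ∑ i ∈ Finset.range n, ⟪h, F i⟫ * ⟪h, g i⟫)
      Filter.atTop (nhds (‖h‖ ^ 2)) := by
    have h0 : Filter.Tendsto (fun n => ⟪h, ∑ i ∈ Finset.range n, ⟪h, F i⟫ • g i⟫)
        Filter.atTop (nhds ⟪h, h⟫) :=
      Filter.Tendsto.inner tendsto_const_nhds (hexp h)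
    have heq : ∀ n, ⟪h, ∑ i ∈ Finset.range n, ⟪h, F i⟫ • g i⟫ =
        ∑ i ∈ Finset.range n, ⟪h, F i⟫ * ⟪h, g i⟫ := by
      intro n
      rw [inner_sum]
      simp only [real_inner_smul_right]
    rw [real_inner_self_eq_norm_sq] at h0
    simpa only [heq] using h0
  have htend2 : Filter.Tendsto (fun n => (∑ i ∈ Finset.range n, ⟪h, F i⟫ * ⟪h, g i⟫) ^ 2)
      Filter.atTop (nhds ((‖h‖ ^ 2) ^ 2)) := htend.pow 2
  -- bound squared partial sums via Cauchy–Schwarz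
  have hbound : ∀ n, (∑ i ∈ Finset.range n, ⟪h, F i⟫ * ⟪h, g i⟫) ^ 2 ≤ T * (B * ‖h‖ ^ 2) := by
    intro n
    have hcs := Finset.sum_mul_sq_le_sq_mul_sq (Finset.range n)
      (fun i => ⟪h, F i⟫) (fun i => ⟪h, g i⟫)
    have h1 : ∑ i ∈ Finset.range n, ⟪h, F i⟫ ^ 2 ≤ T :=
      Summable.sum_le_tsum _ (fun i _ => sq_nonneg _) hsum
    have h2 : ∑ i ∈ Finset.range n, ⟪h, g i⟫ ^ 2 ≤ B * ‖h‖ ^ 2 :=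
      le_trans (Summable.sum_le_tsum _ (fun i _ => sq_nonneg _) (hBessel h).1) (hBessel h).2
    have h1' : (0:ℝ) ≤ ∑ i ∈ Finset.range n, ⟪h, F i⟫ ^ 2 :=
      Finset.sum_nonneg fun i _ => sq_nonneg _
    have h2' : (0:ℝ) ≤ ∑ i ∈ Finset.range n, ⟪h, g i⟫ ^ 2 :=
      Finset.sum_nonneg fun i _ => sq_nonneg _
    calc (∑ i ∈ Finset.range n, ⟪h, F i⟫ * ⟪h, g i⟫) ^ 2
        ≤ (∑ i ∈ Finset.range n, ⟪h, F i⟫ ^ 2) * (∑ i ∈ Finset.range n, ⟪h, g i⟫ ^ 2) := hcs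
      _ ≤ T * (B * ‖h‖ ^ 2) := mul_le_mul h1 h2 h2' hTnonneg
  have hsq : (‖h‖ ^ 2) ^ 2 ≤ T * (B * ‖h‖ ^ 2) :=
    le_of_tendsto htend2 (Filter.Eventually.of_forall hbound)
  rcases eq_or_ne h 0 with rfl | hne
  · simp [hTnonneg]
  · have hn : 0 < ‖h‖ := norm_pos_iff.mpr hne
    have hpos : 0 < ‖h‖ ^ 2 := by positivity
    rw [div_mul_eq_mul_div, div_le_iff₀ hB, one_mul]
    nlinarith
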